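/- Let d ≥ 1, k > 1, and let V : ℝ^d → [1, ∞) be continuous with constants c_V, M_V, r_V > 0 such that c_V|x|^k ≤ V(x) ≤ M_V|x|^k whenever |x| ≥ r_V. Let 0 < β < min(1, k/2, k−1), κ > 0, and let L : ℝ^d → ℝ^d satisfy L(x) = 0 for |x| ≤ 1 and |L(x)| ≤ κ|x|^β for all x. Then for all ℏ, 𝔞 > 0 there exist c, c', C > 0 such that for all (x,v,z) ∈ ℝ^{3d}: c(|x|^k + |v|² + |z|²) − C ≤ ℏ(V(x) + |v|²/2 + |z|²/2) + 𝔞⟨L(x), v⟩ ≤ c'(1 + |x|^k + |v|² + |z|²). -/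

import Mathlib

open scoped InnerProductSpace

lemma rpow_le_add_one (θ s : ℝ) (hs : 0 ≤ s) (hθ0 : 0 ≤ θ) (hθ1 : θ ≤ 1) :
    s ^ θ ≤ 1 + s := by
  rcases le_total s 1 with h | h
  · have := Real.rpow_le_one hs h hθ0
    linarith
  · have := Real.rpow_le_rpow_of_exponent_le h hθ1
    rw [Real.rpow_one] at this
    linarith

lemma aux_young (p q ε : ℝ) (hp : 0 < p) (hpq : p < q) (hε : 0 < ε) :
    ∃ C > 0, ∀ t : ℝ, 0 ≤ t → t ^ p ≤ ε * t ^ q + C := by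
  have hq : 0 < q := hp.trans hpq
  set θ := p / q with hθdef
  have hθ0 : 0 < θ := div_pos hp hq
  have hθ1 : θ < 1 := (div_lt_one hq).mpr hpq
  set δ := ε ^ ((1:ℝ)/(1-θ)) with hδdef
  have hδ0 : 0 < δ := Real.rpow_pos_of_pos hε _
  have hδε : δ ^ (1-θ) = ε := by
    rw [hδdef, ← Real.rpow_mul hε.le, one_div, inv_mul_cancel₀ (by linarith), Real.rpow_one]
  refine ⟨δ ^ (-θ), Real.rpow_pos_of_pos hδ0 _, fun t ht => ?_⟩
  have hs : (0:ℝ) ≤ t ^ q := Real.rpow_nonneg ht q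
  have h1 : t ^ p = (t ^ q) ^ θ := by
    rw [← Real.rpow_mul ht]
    congr 1
    field_simp [hθdef]
    rw [hθdef]; field_simp
  have h2 : (δ * t ^ q) ^ θ = δ ^ θ * (t ^ q) ^ θ := Real.mul_rpow hδ0.le hs
  have h3 : (δ * t ^ q) ^ θ ≤ 1 + δ * t ^ q :=
    rpow_le_add_one θ _ (by positivity) hθ0.le hθ1.le
  have h4 : δ ^ (-θ) * δ ^ θ = 1 := by
    rw [← Real.rpow_add hδ0]; simp
  have h5 : δ ^ (-θ) * δ = δ ^ (1 - θ) := by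
    rw [sub_eq_add_neg, Real.rpow_add hδ0, Real.rpow_one, mul_comm]
  have h6 : (t ^ q) ^ θ = δ ^ (-θ) * (δ * t ^ q) ^ θ := by
    rw [h2, ← mul_assoc, h4, one_mul]
  have hδθpos : (0:ℝ) < δ ^ (-θ) := Real.rpow_pos_of_pos hδ0 _
  calc t ^ p = δ ^ (-θ) * (δ * t ^ q) ^ θ := by rw [h1, h6]
    _ ≤ δ ^ (-θ) * (1 + δ * t ^ q) := mul_le_mul_of_nonneg_left h3 hδθpos.le
    _ = ε * t ^ q + δ ^ (-θ) := by rw [mul_add, mul_one, ← mul_assoc, h5, hδε]; ring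

set_option maxHeartbeats 1000000 in
theorem stmt_8 {d : ℕ} (hd : 1 ≤ d) (k : ℝ) (hk : 1 < k)
    (V : EuclideanSpace ℝ (Fin d) → ℝ) (hV1 : ∀ x, 1 ≤ V x) (hVc : Continuous V)
    (cV MV rV : ℝ) (hcV : 0 < cV) (hMV : 0 < MV) (hrV : 0 < rV)
    (hgrow : ∀ x : EuclideanSpace ℝ (Fin d), rV ≤ ‖x‖ →
      cV * ‖x‖ ^ k ≤ V x ∧ V x ≤ MV * ‖x‖ ^ k)
    (β κ : ℝ) (hβ0 : 0 < β) (hβ : β < min 1 (min (k / 2) (k - 1))) (hκ : 0 < κ)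
    (L : EuclideanSpace ℝ (Fin d) → EuclideanSpace ℝ (Fin d))
    (hL0 : ∀ x : EuclideanSpace ℝ (Fin d), ‖x‖ ≤ 1 → L x = 0)
    (hLbound : ∀ x : EuclideanSpace ℝ (Fin d), ‖L x‖ ≤ κ * ‖x‖ ^ β) :
    ∀ hbar 𝔞 : ℝ, 0 < hbar → 0 < 𝔞 →
      ∃ c > 0, ∃ c' > 0, ∃ C > 0, ∀ x v z : EuclideanSpace ℝ (Fin d),
        c * (‖x‖ ^ k + ‖v‖ ^ 2 + ‖z‖ ^ 2) - C
            ≤ hbar * (V x + ‖v‖ ^ 2 / 2 + ‖z‖ ^ 2 / 2) + 𝔞 * ⟪L x, v⟫_ℝ ∧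
          hbar * (V x + ‖v‖ ^ 2 / 2 + ‖z‖ ^ 2 / 2) + 𝔞 * ⟪L x, v⟫_ℝ
            ≤ c' * (1 + ‖x‖ ^ k + ‖v‖ ^ 2 + ‖z‖ ^ 2) := by
  intro hbar a hh ha
  have hk0 : (0:ℝ) < k := by linarith
  have hβk : 2 * β < k := by
    have h2 := (lt_min_iff.mp hβ).2
    have h3 := (lt_min_iff.mp h2).1
    linarith
  have hβ1 : β < 1 := (lt_min_iff.mp hβ).1
  -- sup of V on the ball of radius rV
  obtain ⟨x₀, hx₀mem, hx₀max⟩ := (isCompact_closedBall (0 : EuclideanSpace ℝ (Fin d)) rV).exists_isMaxOn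
    ⟨0, by simp [hrV.le]⟩ hVc.continuousOn
  set C₀ := V x₀ with hC₀def
  have hC₀1 : 1 ≤ C₀ := hV1 x₀
  have hVup : ∀ x : EuclideanSpace ℝ (Fin d), V x ≤ C₀ + MV * ‖x‖ ^ k := by
    intro x
    have hXnn : (0:ℝ) ≤ ‖x‖ ^ k := Real.rpow_nonneg (norm_nonneg x) k
    rcases le_total ‖x‖ rV with h | h
    · have : V x ≤ C₀ := hx₀max (by simpa [Metric.mem_closedBall, dist_eq_norm] using h)
      nlinarith
    · have := (hgrow x h).2
      linarith
  have hVlow : ∀ x : EuclideanSpace ℝ (Fin d), cV * ‖x‖ ^ k - cV * rV ^ k ≤ V x := by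
    intro x
    rcases le_total ‖x‖ rV with h | h
    · have h1 : ‖x‖ ^ k ≤ rV ^ k := Real.rpow_le_rpow (norm_nonneg x) h hk0.le
      have h2 := hV1 x
      nlinarith
    · have := (hgrow x h).1
      have h1 : (0:ℝ) ≤ rV ^ k := Real.rpow_nonneg hrV.le k
      nlinarith
  -- constants
  set A := (a * κ) ^ 2 / hbar with hAdef
  have hA : 0 < A := by positivity
  set ε := hbar * cV / (2 * A) with hεdef
  have hε : 0 < ε := by positivity
  have hAε : A * ε = hbar * cV / 2 := by
    field_simp [hεdef]
    rw [hεdef]; field_simp [hA.ne']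
  obtain ⟨Cε, hCε, hYoung⟩ := aux_young (2 * β) k ε (by linarith) hβk hε
  refine ⟨min (hbar * cV / 2) (hbar / 4), by positivity,
    hbar * (C₀ + MV + 1) + a * κ, by positivity,
    hbar * cV * rV ^ k + A * Cε + 1, by positivity, fun x v z => ?_⟩
  set X := ‖x‖ ^ k with hXdef
  set P := ‖x‖ ^ (2 * β) with hPdef
  have hXnn : (0:ℝ) ≤ X := Real.rpow_nonneg (norm_nonneg x) k
  have hPnn : (0:ℝ) ≤ P := Real.rpow_nonneg (norm_nonneg x) _
  have hV2 : (0:ℝ) ≤ ‖v‖ ^ 2 := sq_nonneg _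
  have hZ2 : (0:ℝ) ≤ ‖z‖ ^ 2 := sq_nonneg _
  set t := ‖x‖ ^ β with htdef
  have ht : 0 ≤ t := Real.rpow_nonneg (norm_nonneg x) β
  have htP : t ^ 2 = P := by
    rw [htdef, hPdef, ← Real.rpow_natCast (‖x‖ ^ β) 2, ← Real.rpow_mul (norm_nonneg x)]
    norm_num
    ring_nf
  have hcross : |⟪L x, v⟫_ℝ| ≤ κ * t * ‖v‖ := by
    calc |⟪L x, v⟫_ℝ| ≤ ‖L x‖ * ‖v‖ := abs_real_inner_le_norm _ _
      _ ≤ κ * t * ‖v‖ := mul_le_mul_of_nonneg_right (hLbound x) (norm_nonneg v)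
  have hcross' : -(κ * t * ‖v‖) ≤ ⟪L x, v⟫_ℝ ∧ ⟪L x, v⟫_ℝ ≤ κ * t * ‖v‖ := abs_le.mp hcross
  have hYx : P ≤ ε * X + Cε := hYoung ‖x‖ (norm_nonneg x)
  have hexp : (a * κ * t) ^ 2 / hbar = A * P := by
    rw [hAdef, ← htP]; ring
  clear_value X P t A ε C₀
  set W := ‖v‖ with hWdef
  set Y := ‖z‖ with hYdef
  set I := ⟪L x, v⟫_ℝ with hIdef
  have hW0 : 0 ≤ W := norm_nonneg v
  clear_value W Y I
  have hVl : cV * X - cV * rV ^ k ≤ V x := by rw [hXdef]; exact hVlow x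
  have hVu : V x ≤ C₀ + MV * X := by rw [hXdef]; exact hVup x
  constructor
  · -- lower bound
    have hyoung2 : a * (κ * t * W) ≤ A * P + hbar * W ^ 2 / 4 := by
      rw [← hexp, div_add_div _ _ (ne_of_gt hh) (by norm_num : (4:ℝ) ≠ 0),
        le_div_iff₀ (by positivity)]
      linarith [sq_nonneg (2 * (a * κ * t) - hbar * W)]
    have hinner : -(A * P + hbar * W ^ 2 / 4) ≤ a * I := by
      have := mul_le_mul_of_nonneg_left hcross'.1 ha.le
      rw [mul_neg] at this
      linarith
    have hPX : A * P ≤ hbar * cV / 2 * X + A * Cε := by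
      have := mul_le_mul_of_nonneg_left hYx hA.le
      rw [mul_add, ← mul_assoc, hAε] at this
      exact this
    have hc1 : min (hbar * cV / 2) (hbar / 4) * X ≤ hbar * cV / 2 * X :=
      mul_le_mul_of_nonneg_right (min_le_left _ _) hXnn
    have hc2 : min (hbar * cV / 2) (hbar / 4) * W ^ 2 ≤ hbar / 4 * W ^ 2 :=
      mul_le_mul_of_nonneg_right (min_le_right _ _) hV2
    have hc3 : min (hbar * cV / 2) (hbar / 4) * Y ^ 2 ≤ hbar / 2 * Y ^ 2 :=
      mul_le_mul_of_nonneg_right (le_trans (min_le_right _ _) (by linarith)) hZ2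
    have hVm : hbar * (cV * X - cV * rV ^ k) ≤ hbar * V x :=
      mul_le_mul_of_nonneg_left hVl hh.le
    linarith [hinner, hPX, hVm, hc1, hc2, hc3]
  · -- upper bound
    have hP1X : P ≤ 1 + X := by
      rw [hPdef, hXdef]
      rcases le_total ‖x‖ 1 with h | h
      · have h1 : ‖x‖ ^ (2*β) ≤ 1 := Real.rpow_le_one (norm_nonneg x) h (by linarith)
        have h2 : (0:ℝ) ≤ ‖x‖ ^ k := Real.rpow_nonneg (norm_nonneg x) k
        linarith
      · have h1 : ‖x‖ ^ (2*β) ≤ ‖x‖ ^ k := Real.rpow_le_rpow_of_exponent_le h (by linarith)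
        linarith
    have hamgm : a * (κ * t * W) ≤ a * κ / 2 * (P + W ^ 2) := by
      rw [← htP]
      linarith [mul_nonneg (mul_nonneg ha.le hκ.le) (sq_nonneg (t - W))]
    have hinner : a * I ≤ a * κ / 2 * (1 + X + W ^ 2) := by
      have h1 := mul_le_mul_of_nonneg_left hcross'.2 ha.le
      have h2 : a * κ / 2 * (P + W ^ 2) ≤ a * κ / 2 * (1 + X + W ^ 2) := by
        linarith [mul_le_mul_of_nonneg_left hP1X (show (0:ℝ) ≤ a * κ / 2 by positivity)]
      linarith
    have hVm : hbar * V x ≤ hbar * (C₀ + MV * X) := mul_le_mul_of_nonneg_left hVu hh.le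
    linarith [hinner, hVm, mul_nonneg hh.le hXnn, mul_nonneg ha.le hκ.le,
      mul_nonneg hh.le hMV.le,
      mul_nonneg (mul_nonneg hh.le hMV.le) hXnn,
      mul_nonneg (mul_nonneg ha.le hκ.le) hXnn,
      mul_nonneg (mul_nonneg ha.le hκ.le) hV2,
      mul_nonneg (mul_nonneg ha.le hκ.le) hZ2,
      mul_nonneg hh.le hZ2, mul_nonneg hh.le hV2,
      mul_nonneg (mul_nonneg hh.le hMV.le) hV2,
      mul_nonneg (mul_nonneg hh.le hMV.le) hZ2,
      mul_nonneg (mul_nonneg hh.le (by linarith : (0:ℝ) ≤ C₀)) hXnn,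
      mul_nonneg (mul_nonneg hh.le (by linarith : (0:ℝ) ≤ C₀)) hV2,
      mul_nonneg (mul_nonneg hh.le (by linarith : (0:ℝ) ≤ C₀)) hZ2]
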